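/- Iterated fixing of operators: let P be a finite condition set and o₁,…,o_k an enumeration of a finite set of operators over P. For any STRIPS instance (P, O, I, G) with O ⊆ {o₁,…,o_k}, let y₁,…,y_k be fresh distinct conditions, let o_i' be o_i with y_i added as a positive precondition, and let I' = I ∪ { y_i : o_i ∈ O }. Then (P, O, I, G) has a plan if and only if (P ∪ {y₁,…,y_k}, {o₁',…,o_k'}, I', G) has a plan. -/

import Mathlib

/-- A STRIPS operator: positive/negative preconditions and positive/negative effects. -/
structure Op (C : Type*) where
  prePos : Set C
  preNeg : Set C
  add : Set C
  del : Set C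

variable {C : Type*}

/-- An operator is applicable in a state `S` if its positive preconditions hold
and its negative preconditions are false. -/
def Applicable (o : Op C) (S : Set C) : Prop :=
  o.prePos ⊆ S ∧ o.preNeg ∩ S = ∅

/-- Executing an operator in a state. -/
def execOp (o : Op C) (S : Set C) : Set C :=
  (S \ o.del) ∪ o.add

/-- `ExecSeq S π T`: the sequence `π` is executable from `S` and leads to `T`. -/
inductive ExecSeq : Set C → List (Op C) → Set C → Prop
  | nil (S : Set C) : ExecSeq S [] S
  | cons {S T : Set C} {o : Op C} {π : List (Op C)} :
      Applicable o S → ExecSeq (execOp o S) π T → ExecSeq S (o :: π) T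

/-- A state is reachable from `I` using operators from `O`. -/
def Reachable (O : Set (Op C)) (I S : Set C) : Prop :=
  ∃ π : List (Op C), (∀ o ∈ π, o ∈ O) ∧ ExecSeq I π S

/-- `π` is a plan for operators `O`, initial state `I`, and goal `(M, N)`. -/
def IsPlan (O : Set (Op C)) (I M N : Set C) (π : List (Op C)) : Prop :=
  (∀ o ∈ π, o ∈ O) ∧ ∃ S, ExecSeq I π S ∧ M ⊆ S ∧ N ∩ S = ∅

/-- The STRIPS instance `(P, O, I, (M, N))` has a plan. -/
def HasPlan (_P : Set C) (O : Set (Op C)) (I M N : Set C) : Prop :=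
  ∃ π, IsPlan O I M N π

/-- An operator mentions a condition if it occurs in any of its four components. -/
def Mentions (o : Op C) (c : C) : Prop :=
  c ∈ o.prePos ∨ c ∈ o.preNeg ∨ c ∈ o.add ∨ c ∈ o.del

/-- iterated fixing of operators. Adding a fresh positive precondition
`y i` to each operator `ops i` of an enumeration, and putting `y i` in the initial
state exactly when `ops i ∈ O`, preserves plan existence; the resulting operator set
depends only on the enumeration, not on `O`. -/
theorem stmt16 (P : Set C) (k : ℕ) (ops : Fin k → Op C) (O : Set (Op C))
    (I M N : Set C) (y : Fin k → C)
    (hO : O ⊆ Set.range ops)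
    (hyinj : Function.Injective y)
    (hyP : ∀ i, y i ∉ P)
    (hopsP : ∀ (j : Fin k) (c : C), Mentions (ops j) c → c ∈ P)
    (hI : I ⊆ P) (hM : M ⊆ P) (hN : N ⊆ P) :
    HasPlan P O I M N ↔
      HasPlan (P ∪ Set.range y)
        (Set.range fun i : Fin k =>
          (⟨(ops i).prePos ∪ {y i}, (ops i).preNeg, (ops i).add, (ops i).del⟩ : Op C))
        (I ∪ {c | ∃ i : Fin k, ops i ∈ O ∧ c = y i}) M N := by

  classical
  set prime : Fin k → Op C := fun i =>
    (⟨(ops i).prePos ∪ {y i}, (ops i).preNeg, (ops i).add, (ops i).del⟩ : Op C) with hprime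
  set Y : Set C := {c | ∃ i : Fin k, ops i ∈ O ∧ c = y i} with hYdef
  have hYP : ∀ c ∈ Y, c ∉ P := by
    rintro c ⟨i, _, rfl⟩; exact hyP i
  have hYdel : ∀ i : Fin k, Y ∩ (ops i).del = ∅ := by
    intro i
    ext c; simp only [Set.mem_inter_iff, Set.mem_empty_iff_false, iff_false, not_and]
    intro hc hd; exact hYP c hc (hopsP i c (Or.inr (Or.inr (Or.inr hd))))
  have hexecEq : ∀ (i : Fin k) (S : Set C),
      execOp (prime i) (S ∪ Y) = execOp (ops i) S ∪ Y := by
    intro i S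
    ext c
    have h1 : c ∈ Y → c ∉ (ops i).del := fun hc hd =>
      hYP c hc (hopsP i c (Or.inr (Or.inr (Or.inr hd))))
    simp only [execOp, hprime, Set.mem_union, Set.mem_diff]
    tauto
  constructor
  · rintro ⟨π, hπO, S, hexec, hMS, hNS⟩
    have key : ∀ (π : List (Op C)) (S T : Set C), (∀ o ∈ π, o ∈ O) → ExecSeq S π T →
        ∃ π', (∀ o ∈ π', o ∈ Set.range prime) ∧ ExecSeq (S ∪ Y) π' (T ∪ Y) := by
      intro π
      induction π with
      | nil =>
        intro S T _ h; cases h; exact ⟨[], by simp, ExecSeq.nil _⟩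
      | cons o π ih =>
        intro S T hmem h
        cases h with
        | cons happ hrest =>
          obtain ⟨i, hi⟩ := hO (hmem o (List.mem_cons_self))
          subst hi
          obtain ⟨π', hπ', hex'⟩ := ih _ _ (fun o ho => hmem o (List.mem_cons_of_mem _ ho)) hrest
          refine ⟨prime i :: π', ?_, ?_⟩
          · intro o' ho'
            rcases List.mem_cons.1 ho' with h | h
            · exact h ▸ ⟨i, rfl⟩
            · exact hπ' o' h
          · refine ExecSeq.cons ⟨?_, ?_⟩ ?_
            · intro c hc
              rcases hc with hc | hc
              · exact Or.inl (happ.1 hc)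
              · exact Or.inr ⟨i, hmem _ (List.mem_cons_self), hc⟩
            · ext c
              simp only [Set.mem_inter_iff, Set.mem_empty_iff_false, iff_false, not_and]
              intro hn hs
              rcases hs with hs | hs
              · have : c ∈ (ops i).preNeg ∩ S := ⟨hn, hs⟩
                rw [happ.2] at this; exact this
              · exact hYP c hs (hopsP i c (Or.inr (Or.inl hn)))
            · rw [hexecEq i S]; exact hex'
    obtain ⟨π', hπ', hex'⟩ := key π I S hπO hexec
    refine ⟨π', hπ', S ∪ Y, hex', hMS.trans Set.subset_union_left, ?_⟩
    ext c
    simp only [Set.mem_inter_iff, Set.mem_empty_iff_false, iff_false, not_and]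
    intro hn hs
    rcases hs with hs | hs
    · have : c ∈ N ∩ S := ⟨hn, hs⟩
      rw [hNS] at this; exact this
    · exact hYP c hs (hN hn)
  · rintro ⟨π', hπ'O, T', hexec, hMT, hNT⟩
    have key : ∀ (π' : List (Op C)) (S T' : Set C), S ⊆ P →
        (∀ o ∈ π', o ∈ Set.range prime) → ExecSeq (S ∪ Y) π' T' →
        ∃ π T, (∀ o ∈ π, o ∈ O) ∧ ExecSeq S π T ∧ T ⊆ P ∧ T' = T ∪ Y := by
      intro π'
      induction π' with
      | nil =>
        intro S T' hSP _ h
        cases h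
        exact ⟨[], S, by simp, ExecSeq.nil _, hSP, rfl⟩
      | cons o' π' ih =>
        intro S T' hSP hmem h
        cases h with
        | @cons _ _ _ _ happ hrest =>
          obtain ⟨i, hi⟩ := hmem o' (List.mem_cons_self)
          subst hi
          have hyiY : y i ∈ Y := by
            have : y i ∈ S ∪ Y := happ.1 (Or.inr rfl)
            rcases this with h | h
            · exact absurd (hSP h) (hyP i)
            · exact h
          have hiO : ops i ∈ O := by
            obtain ⟨j, hj, hyj⟩ := hyiY
            rwa [hyinj hyj]
          have hpre : (ops i).prePos ⊆ S := by
            intro c hc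
            rcases happ.1 (Or.inl hc) with h | h
            · exact h
            · exact absurd (hopsP i c (Or.inl hc)) (hYP c h)
          have hneg : (ops i).preNeg ∩ S = ∅ := by
            apply Set.eq_empty_of_subset_empty
            intro c hc
            have : c ∈ (prime i).preNeg ∩ (S ∪ Y) := ⟨hc.1, Or.inl hc.2⟩
            rw [happ.2] at this; exact this
          have hS1P : execOp (ops i) S ⊆ P := by
            intro c hc
            rcases hc with hc | hc
            · exact hSP hc.1
            · exact hopsP i c (Or.inr (Or.inr (Or.inl hc)))
          rw [hexecEq i S] at hrest
          obtain ⟨π, T, hπO, hex, hTP, rfl⟩ :=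
            ih (execOp (ops i) S) T' hS1P (fun o ho => hmem o (List.mem_cons_of_mem _ ho)) hrest
          refine ⟨ops i :: π, T, ?_, ExecSeq.cons ⟨hpre, hneg⟩ hex, hTP, rfl⟩
          intro o ho
          rcases List.mem_cons.1 ho with h | h
          · exact h ▸ hiO
          · exact hπO o h
    obtain ⟨π, T, hπO, hex, hTP, rfl⟩ := key π' I T' hI hπ'O hexec
    refine ⟨π, hπO, T, hex, ?_, ?_⟩
    · intro c hc
      rcases hMT hc with h | h
      · exact h
      · exact absurd (hM hc) (hYP c h)
    · apply Set.eq_empty_of_subset_empty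
      intro c hc
      have : c ∈ N ∩ (T ∪ Y) := ⟨hc.1, Or.inl hc.2⟩
      rw [hNT] at this; exact this
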